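/- Let H be a Hopf algebra with bijective antipode over a field k. View k as a right H-module via a character δ: H → k and as a left H-comodule via a group-like element σ ∈ H (so the coaction is 1 ↦ σ ⊗ 1). Then k with these structures is a stable anti-Yetter-Drinfeld module if and only if (δ, σ) is a modular pair in involution, i.e., δ(σ) = 1 and the twisted antipode S̃(h) := δ(h^{(1)}) S(h^{(2)}) satisfies S̃²(h) = σ h σ^{-1} for all h ∈ H. -/

import Mathlib

open TensorProduct

namespace HC

variable {k : Type} [Field k]
variable {H : Type} [Ring H] [Algebra k H]
variable {M : Type} [AddCommGroup M] [Module k M]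

/-- The right-left anti-Yetter-Drinfeld condition
`Δ_M(mh) = S(h⁽³⁾) m⁽⁻¹⁾ h⁽¹⁾ ⊗ m⁽⁰⁾ h⁽²⁾`, phrased via arbitrary finite
Sweedler representations.  Here the right action is given in curried form:
`m · h = act h m`. -/
def AYDrl (Δ : H →ₗ[k] H ⊗[k] H) (S : H →ₗ[k] H)
    (act : H →ₗ[k] M →ₗ[k] M) (coact : M →ₗ[k] H ⊗[k] M) : Prop :=
  ∀ (h : H) (m : M) (s : Finset ℕ) (a b : ℕ → H)
    (t : ℕ → Finset ℕ) (c d : ℕ → ℕ → H)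
    (u : Finset ℕ) (e : ℕ → H) (m0 : ℕ → M),
    Δ h = ∑ i ∈ s, a i ⊗ₜ b i →
    (∀ i ∈ s, Δ (b i) = ∑ j ∈ t i, c i j ⊗ₜ d i j) →
    coact m = ∑ l ∈ u, e l ⊗ₜ m0 l →
    coact (act h m) = ∑ i ∈ s, ∑ j ∈ t i, ∑ l ∈ u,
      (S (d i j) * e l * a i) ⊗ₜ act (c i j) (m0 l)

/-- Stability for a left comodule: `action ∘ coaction = id`
(i.e. `m⁽⁰⁾ · m⁽⁻¹⁾ = m` in the right-module case). -/
def StableL (act : H →ₗ[k] M →ₗ[k] M) (coact : M →ₗ[k] H ⊗[k] M) : Prop :=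
  ∀ (m : M) (u : Finset ℕ) (e : ℕ → H) (m0 : ℕ → M),
    coact m = ∑ l ∈ u, e l ⊗ₜ m0 l →
    ∑ l ∈ u, act (e l) (m0 l) = m

end HC

section

open HC TensorProduct

variable {k : Type} [Field k] {H : Type} [Ring H] [HopfAlgebra k H]

/-- The twisted antipode `S̃(h) = δ(h⁽¹⁾) S(h⁽²⁾)` attached to a character `δ`. -/
noncomputable def twistedAntipode (δ : H →ₐ[k] k) : H →ₗ[k] H :=
  (TensorProduct.lift (LinearMap.mk₂ k
      (fun h1 h2 => δ h1 • HopfAlgebra.antipode (R := k) h2)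
      (by intros; simp [add_smul])
      (by intros; simp [mul_smul])
      (by intros; simp [smul_add])
      (by intros c m n; simp [smul_comm c (δ m)]))) ∘ₗ
    Coalgebra.comul (R := k)

end

namespace HCAux

open Coalgebra

variable {k : Type} [Field k]

section Lift3

variable {C M : Type} [AddCommGroup C] [Module k C] [AddCommGroup M] [Module k M]

noncomputable def lift3 (f : C →ₗ[k] C →ₗ[k] C →ₗ[k] M) : C ⊗[k] (C ⊗[k] C) →ₗ[k] M :=
  TensorProduct.lift ((TensorProduct.lift.equiv (RingHom.id k) C C M).toLinearMap ∘ₗ f)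

@[simp] lemma lift3_tmul (f : C →ₗ[k] C →ₗ[k] C →ₗ[k] M) (a b c : C) :
    lift3 f (a ⊗ₜ (b ⊗ₜ c)) = f a b c := rfl

noncomputable def mk3 (F : C → C → C → M)
    (h1 : ∀ b c, IsLinearMap k (fun a => F a b c))
    (h2 : ∀ a c, IsLinearMap k (fun b => F a b c))
    (h3 : ∀ a b, IsLinearMap k (F a b)) : C →ₗ[k] C →ₗ[k] C →ₗ[k] M :=
  LinearMap.mk₂ k (fun a b => IsLinearMap.mk' (F a b) (h3 a b))
    (fun a a' b => by ext c; exact (h1 b c).map_add a a')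
    (fun r a b => by ext c; exact (h1 b c).map_smul r a)
    (fun a b b' => by ext c; exact (h2 a c).map_add b b')
    (fun r a b => by ext c; exact (h2 a c).map_smul r b)

@[simp] lemma mk3_apply (F : C → C → C → M)
    (h1 : ∀ b c, IsLinearMap k (fun a => F a b c))
    (h2 : ∀ a c, IsLinearMap k (fun b => F a b c))
    (h3 : ∀ a b, IsLinearMap k (F a b)) (a b c : C) :
    mk3 F h1 h2 h3 a b c = F a b c := rfl

end Lift3

section CoalgTools

variable {C M : Type} [AddCommGroup C] [Module k C] [Coalgebra k C]
  [AddCommGroup M] [Module k M]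

lemma tri_sum {x : C} {ι κ Λ : Type} (f : C →ₗ[k] C →ₗ[k] C →ₗ[k] M) (r : Repr k x ι)
    (r1 : ∀ i : ι, Repr k (r.left i) κ) (r2 : ∀ i : ι, Repr k (r.right i) Λ) :
    ∑ i ∈ r.index, ∑ j ∈ (r1 i).index,
      f ((r1 i).left j) ((r1 i).right j) (r.right i)
    = ∑ i ∈ r.index, ∑ j ∈ (r2 i).index,
      f (r.left i) ((r2 i).left j) ((r2 i).right j) := by
  have h := Coalgebra.sum_tmul_tmul_eq (κ := fun _ => κ) (Λ := fun _ => Λ) r r1 r2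
  have h2 := congrArg (lift3 f) h
  simpa [map_sum] using h2

lemma nested_eq {x : C} {ι κ : Type} (f : C →ₗ[k] C →ₗ[k] C →ₗ[k] M) (r : Repr k x ι)
    (r2 : ∀ i : ι, Repr k (r.right i) κ) :
    ∑ i ∈ r.index, ∑ j ∈ (r2 i).index,
      f (r.left i) ((r2 i).left j) ((r2 i).right j)
    = lift3 f ((LinearMap.lTensor C (Coalgebra.comul (R := k)))
        (Coalgebra.comul (R := k) x)) := by
  rw [← r.eq, map_sum, map_sum]
  refine Finset.sum_congr rfl fun i _ => ?_
  rw [LinearMap.lTensor_tmul, ← (r2 i).eq, tmul_sum, map_sum]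
  simp

lemma sum_counit_smul_right {x : C} {ι : Type} (r : Repr k x ι) :
    ∑ i ∈ r.index, counit (R := k) (r.right i) • r.left i = x := by
  have h := congrArg (TensorProduct.rid k C) (Coalgebra.sum_tmul_counit_eq (R := k) r)
  rw [map_sum] at h
  simp only [TensorProduct.rid_tmul] at h
  simpa using h

lemma sum_counit_smul_left {x : C} {ι : Type} (r : Repr k x ι) :
    ∑ i ∈ r.index, counit (R := k) (r.left i) • r.right i = x := by
  have h := congrArg (TensorProduct.lid k C) (Coalgebra.sum_counit_tmul_eq (R := k) r)
  rw [map_sum] at h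
  simp only [TensorProduct.lid_tmul] at h
  simpa using h

end CoalgTools

section Conv

variable {C A B : Type} [AddCommGroup C] [Module k C] [Coalgebra k C]
  [Ring A] [Algebra k A] [Ring B] [Algebra k B]

noncomputable def cv (f g : C →ₗ[k] A) : C →ₗ[k] A :=
  LinearMap.mul' k A ∘ₗ TensorProduct.map f g ∘ₗ Coalgebra.comul

noncomputable def uη : C →ₗ[k] A := Algebra.linearMap k A ∘ₗ Coalgebra.counit

lemma uη_apply (x : C) :
    (uη (k := k) (C := C) (A := A)) x = counit (R := k) x • 1 := by
  simp [uη, Algebra.algebraMap_eq_smul_one]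

lemma cv_apply {x : C} (f g : C →ₗ[k] A) {ι : Type} (r : Repr k x ι) :
    cv f g x = ∑ i ∈ r.index, f (r.left i) * g (r.right i) := by
  simp only [cv, LinearMap.comp_apply, ← r.eq, map_sum, TensorProduct.map_tmul,
    LinearMap.mul'_apply]

lemma cv_one (f : C →ₗ[k] A) : cv f uη = f := by
  ext x
  rw [cv_apply f uη (ℛ k x)]
  calc ∑ i ∈ (ℛ k x).index, f ((ℛ k x).left i) * uη ((ℛ k x).right i)
      = ∑ i ∈ (ℛ k x).index, f (counit (R := k) ((ℛ k x).right i) • (ℛ k x).left i) := by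
        refine Finset.sum_congr rfl fun i _ => ?_
        rw [uη_apply, mul_smul_comm, mul_one, map_smul]
    _ = f x := by rw [← map_sum, sum_counit_smul_right]

lemma one_cv (f : C →ₗ[k] A) : cv uη f = f := by
  ext x
  rw [cv_apply uη f (ℛ k x)]
  calc ∑ i ∈ (ℛ k x).index, uη ((ℛ k x).left i) * f ((ℛ k x).right i)
      = ∑ i ∈ (ℛ k x).index, f (counit (R := k) ((ℛ k x).left i) • (ℛ k x).right i) := by
        refine Finset.sum_congr rfl fun i _ => ?_
        rw [uη_apply, smul_mul_assoc, one_mul, map_smul]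
    _ = f x := by rw [← map_sum, sum_counit_smul_left]

lemma cv_assoc (f g w : C →ₗ[k] A) : cv (cv f g) w = cv f (cv g w) := by
  ext x
  set r := ℛ k x
  have key := tri_sum (M := A)
    (mk3 (fun a b c => f a * (g b * w c))
      (fun b c => ⟨fun a a' => by simp [add_mul], fun s a => by simp [smul_mul_assoc]⟩)
      (fun a c => ⟨fun b b' => by simp [add_mul, mul_add], fun s b => by
        simp [smul_mul_assoc, mul_smul_comm]⟩)
      (fun a b => ⟨fun c c' => by simp [mul_add], fun s c => by simp [mul_smul_comm]⟩))
    r (fun i => ℛ k (r.left i)) (fun i => ℛ k (r.right i))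
  simp only [mk3_apply] at key
  rw [cv_apply (cv f g) w r, cv_apply f (cv g w) r]
  calc ∑ i ∈ r.index, cv f g (r.left i) * w (r.right i)
      = ∑ i ∈ r.index, ∑ j ∈ (ℛ k (r.left i)).index,
          f ((ℛ k (r.left i)).left j) * ((g ((ℛ k (r.left i)).right j)) * w (r.right i)) := by
        refine Finset.sum_congr rfl fun i _ => ?_
        rw [cv_apply f g (ℛ k (r.left i)), Finset.sum_mul]
        exact Finset.sum_congr rfl fun j _ => mul_assoc _ _ _
    _ = ∑ i ∈ r.index, ∑ j ∈ (ℛ k (r.right i)).index,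
          f (r.left i) * (g ((ℛ k (r.right i)).left j) * w ((ℛ k (r.right i)).right j)) := key
    _ = ∑ i ∈ r.index, f (r.left i) * cv g w (r.right i) := by
        refine Finset.sum_congr rfl fun i _ => ?_
        rw [cv_apply g w (ℛ k (r.right i)), Finset.mul_sum]

lemma cv_unique (m f g : C →ₗ[k] A) (h1 : cv m f = uη) (h2 : cv g m = uη) : f = g := by
  have : g = f := calc
    g = cv g uη := (cv_one g).symm
    _ = cv g (cv m f) := by rw [h1]
    _ = cv (cv g m) f := (cv_assoc g m f).symm
    _ = cv uη f := by rw [h2]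
    _ = f := one_cv f
  exact this.symm

lemma cv_algHom_comp (φ : A →ₐ[k] B) (f g : C →ₗ[k] A) :
    φ.toLinearMap ∘ₗ cv f g = cv (φ.toLinearMap ∘ₗ f) (φ.toLinearMap ∘ₗ g) := by
  ext x
  simp only [LinearMap.comp_apply, cv_apply f g (ℛ k x),
    cv_apply (φ.toLinearMap ∘ₗ f) (φ.toLinearMap ∘ₗ g) (ℛ k x), map_sum]
  exact Finset.sum_congr rfl fun i _ => map_mul φ _ _

lemma algHom_comp_uη (φ : A →ₐ[k] B) :
    φ.toLinearMap ∘ₗ (uη (k := k) (C := C) (A := A)) = uη := by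
  ext x
  simp [uη_apply, map_smul]

lemma cv_apply_coalgHom {C' : Type} [AddCommGroup C'] [Module k C'] [Coalgebra k C']
    (ψ : C' →ₗ[k] C)
    (hψ : ∀ y : C', Coalgebra.comul (R := k) (ψ y)
      = TensorProduct.map ψ ψ (Coalgebra.comul (R := k) y))
    (f g : C →ₗ[k] A) (y : C') :
    cv f g (ψ y) = cv (f ∘ₗ ψ) (g ∘ₗ ψ) y := by
  rw [cv, cv, LinearMap.comp_apply, LinearMap.comp_apply, LinearMap.comp_apply,
    LinearMap.comp_apply, hψ, ← LinearMap.comp_apply (TensorProduct.map f g),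
    ← TensorProduct.map_comp]

end Conv

section Hopf

variable {H : Type} [Ring H] [HopfAlgebra k H]
variable {A : Type} [Ring A] [Algebra k A]

noncomputable def aS : H →ₗ[k] H := HopfAlgebra.antipode (R := k)

lemma cv_S_id : cv (aS (k := k) (H := H)) LinearMap.id = uη := by
  have h : TensorProduct.map (aS (k := k) (H := H)) LinearMap.id
      = (HopfAlgebra.antipode (R := k)).rTensor H := rfl
  unfold cv uη
  rw [h]
  exact HopfAlgebra.mul_antipode_rTensor_comul

lemma cv_id_S : cv LinearMap.id (aS (k := k) (H := H)) = uη := by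
  have h : TensorProduct.map LinearMap.id (aS (k := k) (H := H))
      = (HopfAlgebra.antipode (R := k)).lTensor H := rfl
  unfold cv uη
  rw [h]
  exact HopfAlgebra.mul_antipode_lTensor_comul

/-- A representation of `comul 1`. -/
noncomputable def oneRepr : Repr k (1 : H) Unit :=
  ⟨(Finset.univ : Finset Unit), fun _ => 1, fun _ => 1, by
    simp [Bialgebra.comul_one, Algebra.TensorProduct.one_def]⟩

lemma antipode_one : (aS (k := k) (H := H)) 1 = 1 := by
  have h := HopfAlgebra.sum_antipode_mul_eq_smul (oneRepr (k := k) (H := H))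
  simpa [oneRepr, aS] using h

lemma sum_aS_mul {x : H} {ι : Type} (r : Repr k x ι) :
    ∑ i ∈ r.index, (aS (k := k)) (r.left i) * r.right i = counit (R := k) x • 1 :=
  HopfAlgebra.sum_antipode_mul_eq_smul r

lemma sum_mul_aS {x : H} {ι : Type} (r : Repr k x ι) :
    ∑ i ∈ r.index, r.left i * (aS (k := k)) (r.right i) = counit (R := k) x • 1 :=
  HopfAlgebra.sum_mul_antipode_eq_smul r

lemma algHom_cv_S (Φ : H →ₐ[k] A) :
    cv Φ.toLinearMap (Φ.toLinearMap ∘ₗ aS (k := k)) = uη := by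
  ext x
  rw [cv_apply _ _ (ℛ k x), uη_apply]
  calc ∑ i ∈ (ℛ k x).index, Φ ((ℛ k x).left i) * Φ (aS (k := k) ((ℛ k x).right i))
      = Φ (∑ i ∈ (ℛ k x).index,
          (ℛ k x).left i * HopfAlgebra.antipode (R := k) ((ℛ k x).right i)) := by
        rw [map_sum]; exact Finset.sum_congr rfl fun i _ => (map_mul Φ _ _).symm
    _ = counit (R := k) x • 1 := by
        rw [HopfAlgebra.sum_mul_antipode_eq_smul (ℛ k x), map_smul, map_one]

lemma algHom_S_cv (Φ : H →ₐ[k] A) :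
    cv (Φ.toLinearMap ∘ₗ aS (k := k)) Φ.toLinearMap = uη := by
  ext x
  rw [cv_apply _ _ (ℛ k x), uη_apply]
  calc ∑ i ∈ (ℛ k x).index, Φ (aS (k := k) ((ℛ k x).left i)) * Φ ((ℛ k x).right i)
      = Φ (∑ i ∈ (ℛ k x).index,
          HopfAlgebra.antipode (R := k) ((ℛ k x).left i) * (ℛ k x).right i) := by
        rw [map_sum]; exact Finset.sum_congr rfl fun i _ => (map_mul Φ _ _).symm
    _ = counit (R := k) x • 1 := by
        rw [HopfAlgebra.sum_antipode_mul_eq_smul (ℛ k x), map_smul, map_one]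

lemma counit_antipode (x : H) :
    counit (R := k) ((aS (k := k)) x) = counit (R := k) x := by
  have h := congrFun (congrArg DFunLike.coe
    (algHom_cv_S (k := k) (Bialgebra.counitAlgHom k H))) x
  rw [cv_apply _ _ (ℛ k x), uη_apply] at h
  simp only [LinearMap.comp_apply, AlgHom.toLinearMap_apply,
    Bialgebra.counitAlgHom_apply, smul_eq_mul, mul_one] at h
  calc counit (R := k) ((aS (k := k)) x)
      = counit (R := k) ((aS (k := k))
          (∑ i ∈ (ℛ k x).index, counit (R := k) ((ℛ k x).left i) • (ℛ k x).right i)) := by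
        rw [sum_counit_smul_left]
    _ = ∑ i ∈ (ℛ k x).index, counit (R := k) ((ℛ k x).left i) *
          counit (R := k) ((aS (k := k)) ((ℛ k x).right i)) := by
        rw [map_sum, map_sum]
        exact Finset.sum_congr rfl fun i _ => by rw [map_smul, map_smul, smul_eq_mul]
    _ = counit (R := k) x := h

/-- Representation of `comul (x * y)` from representations of `x` and `y`. -/
noncomputable def mulRepr {x y : H} {ι ι' : Type} (rx : Repr k x ι) (ry : Repr k y ι') :
    Repr k (x * y) (ι × ι') :=
  ⟨rx.index ×ˢ ry.index, fun p => rx.left p.1 * ry.left p.2,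
    fun p => rx.right p.1 * ry.right p.2, by
      rw [Bialgebra.comul_mul, ← rx.eq, ← ry.eq, Finset.sum_mul_sum]
      rw [Finset.sum_product]
      exact Finset.sum_congr rfl fun i _ => Finset.sum_congr rfl fun j _ =>
        (Algebra.TensorProduct.tmul_mul_tmul _ _ _ _).symm⟩

/-- Representation of `comul (x ⊗ₜ y)` in the tensor-product coalgebra. -/
noncomputable def tensorRepr {x y : H} {ι ι' : Type} (rx : Repr k x ι) (ry : Repr k y ι') :
    Repr k (x ⊗ₜ[k] y : H ⊗[k] H) (ι × ι') :=
  ⟨rx.index ×ˢ ry.index, fun p => rx.left p.1 ⊗ₜ ry.left p.2,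
    fun p => rx.right p.1 ⊗ₜ ry.right p.2, by
      have : Coalgebra.comul (R := k) (x ⊗ₜ[k] y)
          = TensorProduct.tensorTensorTensorComm k H H H H
              (TensorProduct.map (Coalgebra.comul) (Coalgebra.comul) (x ⊗ₜ y)) := by
        simp [TensorProduct.AlgebraTensorModule.tensorTensorTensorComm_eq]
      rw [this, TensorProduct.map_tmul, ← rx.eq, ← ry.eq, TensorProduct.sum_tmul]
      rw [map_sum, Finset.sum_product]
      refine Finset.sum_congr rfl fun i _ => ?_
      rw [TensorProduct.tmul_sum, map_sum]
      refine Finset.sum_congr rfl fun j _ => ?_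
      rw [TensorProduct.tensorTensorTensorComm_tmul]⟩

lemma counit_tensor (x y : H) :
    counit (R := k) (x ⊗ₜ[k] y : H ⊗[k] H) = counit (R := k) x * counit (R := k) y := by
  simp [mul_comm]

lemma comul_mul'_apply (z : H ⊗[k] H) :
    Coalgebra.comul (R := k) (LinearMap.mul' k H z)
      = TensorProduct.map (LinearMap.mul' k H) (LinearMap.mul' k H)
          (Coalgebra.comul (R := k) z) := by
  induction z using TensorProduct.induction_on with
  | zero => simp
  | add a b ha hb => simp [map_add, ha, hb]
  | tmul x y =>
    rw [LinearMap.mul'_apply, ← (tensorRepr (ℛ k x) (ℛ k y)).eq, map_sum]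
    rw [Bialgebra.comul_mul, ← (ℛ k x).eq, ← (ℛ k y).eq, Finset.sum_mul_sum]
    simp only [tensorRepr, Finset.sum_product]
    refine Finset.sum_congr rfl fun i _ => Finset.sum_congr rfl fun j _ => ?_
    rw [TensorProduct.map_tmul, LinearMap.mul'_apply, LinearMap.mul'_apply,
      Algebra.TensorProduct.tmul_mul_tmul]

lemma counit_mul'_apply (z : H ⊗[k] H) :
    counit (R := k) (LinearMap.mul' k H z) = counit (R := k) z := by
  induction z using TensorProduct.induction_on with
  | zero => simp
  | add a b ha hb => simp [map_add, ha, hb]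
  | tmul x y => rw [LinearMap.mul'_apply, Bialgebra.counit_mul, counit_tensor]

lemma antipode_mul (x y : H) :
    (aS (k := k)) (x * y) = (aS (k := k)) y * (aS (k := k)) x := by
  have main : (aS (k := k)) ∘ₗ LinearMap.mul' k H
      = LinearMap.mul' k H ∘ₗ TensorProduct.map (aS (k := k)) (aS (k := k))
          ∘ₗ (TensorProduct.comm k H H).toLinearMap := by
    refine cv_unique (LinearMap.mul' k H) _ _ ?_ ?_
    · -- cv mul' (S ∘ mul') = uη
      refine LinearMap.ext fun z => ?_
      calc cv (LinearMap.mul' k H) ((aS (k := k)) ∘ₗ LinearMap.mul' k H) z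
          = cv ((LinearMap.id : H →ₗ[k] H) ∘ₗ LinearMap.mul' k H)
              ((aS (k := k)) ∘ₗ LinearMap.mul' k H) z := by rw [LinearMap.id_comp]
        _ = cv LinearMap.id (aS (k := k)) (LinearMap.mul' k H z) :=
            (cv_apply_coalgHom _ comul_mul'_apply _ _ z).symm
        _ = uη z := by rw [cv_id_S, uη_apply, uη_apply, counit_mul'_apply]
    · -- cv (mul' ∘ (S ⊗ S) ∘ comm) mul' = uη
      refine LinearMap.ext fun z => ?_
      induction z using TensorProduct.induction_on with
      | zero => simp
      | add a b ha hb => simp only [map_add, ha, hb]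
      | tmul x y =>
        rw [cv_apply _ _ (tensorRepr (ℛ k x) (ℛ k y)), uη_apply, counit_tensor]
        simp only [tensorRepr, LinearMap.comp_apply, LinearEquiv.coe_coe,
          TensorProduct.comm_tmul, TensorProduct.map_tmul, LinearMap.mul'_apply]
        rw [Finset.sum_product_right]
        have step : ∀ j ∈ (ℛ k y).index, ∑ i ∈ (ℛ k x).index,
            (aS (k := k) ((ℛ k y).left j) * aS (k := k) ((ℛ k x).left i))
              * ((ℛ k x).right i * (ℛ k y).right j)
            = counit (R := k) x
                • (aS (k := k) ((ℛ k y).left j) * (ℛ k y).right j) := by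
          intro j _
          calc ∑ i ∈ (ℛ k x).index,
              (aS (k := k) ((ℛ k y).left j) * aS (k := k) ((ℛ k x).left i))
                * ((ℛ k x).right i * (ℛ k y).right j)
              = ∑ i ∈ (ℛ k x).index, aS (k := k) ((ℛ k y).left j)
                  * ((aS (k := k) ((ℛ k x).left i) * (ℛ k x).right i)
                    * (ℛ k y).right j) := by
                refine Finset.sum_congr rfl fun i _ => ?_
                rw [mul_assoc, ← mul_assoc (aS (k := k) ((ℛ k x).left i))]
            _ = aS (k := k) ((ℛ k y).left j)
                  * ((∑ i ∈ (ℛ k x).index,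
                      aS (k := k) ((ℛ k x).left i) * (ℛ k x).right i)
                    * (ℛ k y).right j) := by
                rw [← Finset.mul_sum, ← Finset.sum_mul]
            _ = counit (R := k) x
                  • (aS (k := k) ((ℛ k y).left j) * (ℛ k y).right j) := by
                rw [sum_aS_mul (ℛ k x), smul_mul_assoc, one_mul, mul_smul_comm]
        rw [Finset.sum_congr rfl step, ← Finset.smul_sum, sum_aS_mul (ℛ k y),
          smul_smul]
  have := congrFun (congrArg DFunLike.coe main) (x ⊗ₜ[k] y)
  simpa using this

lemma comul_eq_cv :
    (Coalgebra.comul (R := k) (A := H))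
      = cv (Algebra.TensorProduct.includeLeft (R := k) (A := H) (B := H)
            (S := k)).toLinearMap
          (Algebra.TensorProduct.includeRight (R := k) (A := H)
            (B := H)).toLinearMap := by
  refine LinearMap.ext fun h => ?_
  rw [cv_apply _ _ (ℛ k h), ← (ℛ k h).eq]
  refine Finset.sum_congr rfl fun i _ => ?_
  simp [Algebra.TensorProduct.tmul_mul_tmul]

lemma antiComul_eq_cv :
    (TensorProduct.comm k H H).toLinearMap ∘ₗ
        TensorProduct.map (aS (k := k)) (aS (k := k)) ∘ₗ Coalgebra.comul
      = cv ((Algebra.TensorProduct.includeRight (R := k) (A := H)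
              (B := H)).toLinearMap ∘ₗ aS (k := k))
          ((Algebra.TensorProduct.includeLeft (R := k) (A := H) (B := H)
              (S := k)).toLinearMap ∘ₗ aS (k := k)) := by
  refine LinearMap.ext fun h => ?_
  rw [cv_apply _ _ (ℛ k h)]
  simp only [LinearMap.comp_apply, ← (ℛ k h).eq, map_sum, TensorProduct.map_tmul,
    LinearEquiv.coe_coe, TensorProduct.comm_tmul, AlgHom.toLinearMap_apply,
    Algebra.TensorProduct.includeRight_apply, Algebra.TensorProduct.includeLeft_apply]
  refine Finset.sum_congr rfl fun i _ => ?_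
  rw [Algebra.TensorProduct.tmul_mul_tmul, one_mul, mul_one]

lemma comul_antipode :
    Coalgebra.comul ∘ₗ (aS (k := k) (H := H))
      = (TensorProduct.comm k H H).toLinearMap ∘ₗ
          TensorProduct.map (aS (k := k)) (aS (k := k)) ∘ₗ Coalgebra.comul := by
  refine (cv_unique (Coalgebra.comul (R := k)) _ _ ?_ ?_).symm
  · -- cv comul (comm ∘ (S ⊗ S) ∘ comul) = uη
    rw [antiComul_eq_cv, comul_eq_cv, cv_assoc, ← cv_assoc
      (Algebra.TensorProduct.includeRight (R := k) (A := H) (B := H)).toLinearMap]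
    have h1 : cv ((Algebra.TensorProduct.includeRight (R := k) (A := H)
        (B := H)).toLinearMap)
        ((Algebra.TensorProduct.includeRight (R := k) (A := H)
            (B := H)).toLinearMap ∘ₗ aS (k := k)) = uη :=
      algHom_cv_S _
    rw [h1, one_cv]
    exact algHom_cv_S _
  · -- cv (comul ∘ S) comul = uη
    have h := algHom_S_cv (k := k) (Bialgebra.comulAlgHom k H)
    have e : (Bialgebra.comulAlgHom k H).toLinearMap
        = (Coalgebra.comul (R := k) (A := H)) := rfl
    rwa [e] at h

lemma comul_antipode_repr {x : H} {ι : Type} (r : Repr k x ι) :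
    Coalgebra.comul (R := k) ((aS (k := k)) x)
      = ∑ i ∈ r.index, (aS (k := k)) (r.right i) ⊗ₜ[k] (aS (k := k)) (r.left i) := by
  have h := congrFun (congrArg DFunLike.coe (comul_antipode (k := k) (H := H))) x
  simp only [LinearMap.comp_apply] at h
  rw [h, ← r.eq, map_sum, map_sum]
  simp

end Hopf

section Sinv

variable {H : Type} [Ring H] [HopfAlgebra k H]
variable (Sinv : H →ₗ[k] H)
variable (hS : ∀ h : H, Sinv (HopfAlgebra.antipode (R := k) h) = h)
variable (hS' : ∀ h : H, HopfAlgebra.antipode (R := k) (Sinv h) = h)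

include hS in
lemma aS_inj : Function.Injective (aS (k := k) (H := H)) := fun a b hab => by
  have hSa : ∀ h : H, Sinv ((aS (k := k)) h) = h := hS
  rw [← hSa a, hab, hSa b]

include hS hS' in
lemma sum_sinv_mul {x : H} {ι : Type} (r : Repr k x ι) :
    ∑ i ∈ r.index, Sinv (r.right i) * r.left i = counit (R := k) x • 1 := by
  apply aS_inj Sinv hS
  rw [map_sum, map_smul, antipode_one]
  calc ∑ i ∈ r.index, (aS (k := k)) (Sinv (r.right i) * r.left i)
      = ∑ i ∈ r.index, (aS (k := k)) (r.left i) * r.right i := by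
        refine Finset.sum_congr rfl fun i _ => ?_
        rw [antipode_mul]
        show _ * (aS (k := k)) (Sinv _) = _
        rw [show ∀ z, (aS (k := k)) (Sinv z) = z from hS']
    _ = counit (R := k) x • 1 := sum_aS_mul r

include hS hS' in
lemma sum_mul_sinv {x : H} {ι : Type} (r : Repr k x ι) :
    ∑ i ∈ r.index, r.right i * Sinv (r.left i) = counit (R := k) x • 1 := by
  apply aS_inj Sinv hS
  rw [map_sum, map_smul, antipode_one]
  calc ∑ i ∈ r.index, (aS (k := k)) (r.right i * Sinv (r.left i))
      = ∑ i ∈ r.index, r.left i * (aS (k := k)) (r.right i) := by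
        refine Finset.sum_congr rfl fun i _ => ?_
        rw [antipode_mul]
        show (aS (k := k)) (Sinv _) * _ = _
        rw [show ∀ z, (aS (k := k)) (Sinv z) = z from hS']
    _ = counit (R := k) x • 1 := sum_mul_aS r

include hS hS' in
lemma comul_sinv {x : H} {ι : Type} (r : Repr k x ι) :
    Coalgebra.comul (R := k) (Sinv x)
      = ∑ i ∈ r.index, Sinv (r.right i) ⊗ₜ[k] Sinv (r.left i) := by
  have inj : Function.Injective fun z : H ⊗[k] H =>
      (TensorProduct.comm k H H) (TensorProduct.map (aS (k := k)) (aS (k := k)) z) := by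
    intro z w hzw
    have h2 := congrArg (fun u => TensorProduct.map Sinv Sinv
      ((TensorProduct.comm k H H).symm u)) hzw
    simpa [← LinearMap.comp_apply, ← TensorProduct.map_comp,
      LinearMap.ext (f := Sinv ∘ₗ aS (k := k)) (g := LinearMap.id) hS] using h2
  apply inj
  simp only []
  have h := congrFun (congrArg DFunLike.coe (comul_antipode (k := k) (H := H))) (Sinv x)
  simp only [LinearMap.comp_apply] at h
  calc (TensorProduct.comm k H H)
        (TensorProduct.map (aS (k := k)) (aS (k := k))
          (Coalgebra.comul (R := k) (Sinv x)))
      = Coalgebra.comul (R := k) ((aS (k := k)) (Sinv x)) := h.symm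
    _ = Coalgebra.comul (R := k) x := by rw [show ∀ z, (aS (k := k)) (Sinv z) = z from hS']
    _ = (TensorProduct.comm k H H) (TensorProduct.map (aS (k := k)) (aS (k := k))
          (∑ i ∈ r.index, Sinv (r.right i) ⊗ₜ[k] Sinv (r.left i))) := by
        rw [map_sum, map_sum, ← r.eq]
        refine Finset.sum_congr rfl fun i _ => ?_
        rw [TensorProduct.map_tmul,
          show ∀ z, (aS (k := k)) (Sinv z) = z from hS',
          show ∀ z, (aS (k := k)) (Sinv z) = z from hS',
          TensorProduct.comm_tmul]

include hS' in
lemma counit_sinv (x : H) : counit (R := k) (Sinv x) = counit (R := k) x := by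
  conv_rhs => rw [← hS' x]
  exact (counit_antipode (Sinv x)).symm

end Sinv

section Char

variable {H : Type} [Ring H] [HopfAlgebra k H] (δ : H →ₐ[k] k)

/-- `δ ∘ S` as an algebra homomorphism. -/
noncomputable def deltaS : H →ₐ[k] k :=
  AlgHom.ofLinearMap (δ.toLinearMap ∘ₗ aS (k := k))
    (by simp [antipode_one])
    (fun x y => by
      simp only [LinearMap.comp_apply, AlgHom.toLinearMap_apply, antipode_mul, map_mul]
      exact mul_comm _ _)

lemma delta_SS (x : H) : δ ((aS (k := k)) ((aS (k := k)) x)) = δ x := by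
  have h1 := algHom_S_cv (k := k) δ
  have h2 := algHom_S_cv (k := k) (deltaS δ)
  have e : (deltaS δ).toLinearMap = δ.toLinearMap ∘ₗ aS (k := k) := rfl
  rw [e] at h2
  have h3 := cv_unique (δ.toLinearMap ∘ₗ aS (k := k)) δ.toLinearMap
    ((δ.toLinearMap ∘ₗ aS (k := k)) ∘ₗ aS (k := k)) h1 h2
  exact (congrFun (congrArg DFunLike.coe h3) x).symm

lemma delta_sinv (Sinv : H →ₗ[k] H)
    (hS' : ∀ h : H, HopfAlgebra.antipode (R := k) (Sinv h) = h) (x : H) :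
    δ (Sinv x) = δ ((aS (k := k)) x) := by
  have h := delta_SS (k := k) δ (Sinv x)
  rw [show (aS (k := k)) (Sinv x) = x from hS' x] at h
  exact h.symm

end Char

section GrpLike

variable {H : Type} [Ring H] [HopfAlgebra k H]
variable (σ σinv : H)
variable (hσ : Coalgebra.comul (R := k) σ = σ ⊗ₜ σ)
variable (hεσ : Coalgebra.counit (R := k) σ = (1 : k))
variable (hσinv : σ * σinv = 1) (hσinv' : σinv * σ = 1)

/-- Representation of `comul σ` for a group-like `σ`. -/
noncomputable def grpRepr (hσ : Coalgebra.comul (R := k) σ = σ ⊗ₜ σ) : Repr k σ Unit :=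
  ⟨(Finset.univ : Finset Unit), fun _ => σ, fun _ => σ, by simp [hσ]⟩

include hσ hεσ hσinv hσinv' in
lemma aS_sigma : (aS (k := k)) σ = σinv := by
  have h := sum_aS_mul (grpRepr (k := k) σ hσ)
  simp only [grpRepr, Finset.univ_unique, Finset.sum_singleton, hεσ, one_smul] at h
  calc (aS (k := k)) σ = (aS (k := k)) σ * (σ * σinv) := by rw [hσinv, mul_one]
    _ = ((aS (k := k)) σ * σ) * σinv := (mul_assoc _ _ _).symm
    _ = σinv := by rw [h, one_mul]

include hσ hσinv hσinv' in
lemma comul_sigmainv : Coalgebra.comul (R := k) σinv = σinv ⊗ₜ σinv := by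
  have h1 : (σ ⊗ₜ[k] σ : H ⊗[k] H) * Coalgebra.comul (R := k) σinv = 1 ⊗ₜ 1 := by
    rw [← hσ, ← Bialgebra.comul_mul, hσinv, Bialgebra.comul_one,
      Algebra.TensorProduct.one_def]
  calc Coalgebra.comul (R := k) σinv
      = ((σinv ⊗ₜ[k] σinv) * (σ ⊗ₜ[k] σ)) * Coalgebra.comul (R := k) σinv := by
        rw [Algebra.TensorProduct.tmul_mul_tmul, hσinv',
          ← Algebra.TensorProduct.one_def, one_mul]
    _ = (σinv ⊗ₜ[k] σinv) * ((σ ⊗ₜ[k] σ) * Coalgebra.comul (R := k) σinv) :=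
        mul_assoc _ _ _
    _ = σinv ⊗ₜ σinv := by
        rw [h1, Algebra.TensorProduct.tmul_mul_tmul, mul_one]

include hσinv hεσ in
lemma counit_sigmainv : Coalgebra.counit (R := k) σinv = 1 := by
  have h : Coalgebra.counit (R := k) σ * Coalgebra.counit (R := k) σinv = 1 := by
    rw [← Bialgebra.counit_mul, hσinv, Bialgebra.counit_one]
  rwa [hεσ, one_mul] at h

include hσ hεσ hσinv hσinv' in
lemma aS_sigmainv : (aS (k := k)) σinv = σ := by
  have h := sum_aS_mul (grpRepr (k := k) σinv (comul_sigmainv σ σinv hσ hσinv hσinv'))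
  simp only [grpRepr, Finset.univ_unique, Finset.sum_singleton,
    counit_sigmainv σ σinv hεσ hσinv, one_smul] at h
  calc (aS (k := k)) σinv = (aS (k := k)) σinv * (σinv * σ) := by rw [hσinv', mul_one]
    _ = ((aS (k := k)) σinv * σinv) * σ := (mul_assoc _ _ _).symm
    _ = σ := by rw [h, one_mul]

end GrpLike

end HCAux


open HC TensorProduct

variable {k : Type} [Field k] {H : Type} [Ring H] [HopfAlgebra k H]

namespace HCAux

section TA

open Coalgebra

variable (δ : H →ₐ[k] k)

lemma tw_apply {h : H} {ι : Type} (r : Repr k h ι) :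
    twistedAntipode δ h = ∑ i ∈ r.index, δ (r.left i) • (aS (k := k)) (r.right i) := by
  rw [twistedAntipode, LinearMap.comp_apply, ← r.eq, map_sum]
  rfl

lemma tw_cv : twistedAntipode δ
    = cv (Algebra.linearMap k H ∘ₗ δ.toLinearMap) (aS (k := k)) := by
  refine LinearMap.ext fun h => ?_
  rw [tw_apply δ (ℛ k h), cv_apply _ _ (ℛ k h)]
  refine Finset.sum_congr rfl fun i _ => ?_
  rw [LinearMap.comp_apply, Algebra.linearMap_apply, AlgHom.toLinearMap_apply,
    ← Algebra.smul_def]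

lemma tw_sum_mul {h : H} {ι : Type} (r : Repr k h ι) :
    ∑ i ∈ r.index, twistedAntipode δ (r.left i) * r.right i = δ h • 1 := by
  have hmap : cv (twistedAntipode δ) LinearMap.id
      = Algebra.linearMap k H ∘ₗ δ.toLinearMap := by
    rw [tw_cv, cv_assoc, cv_S_id, cv_one]
  have h1 := congrFun (congrArg DFunLike.coe hmap) h
  rw [cv_apply _ _ r] at h1
  simp only [LinearMap.id_apply] at h1
  rw [h1, LinearMap.comp_apply, Algebra.linearMap_apply, AlgHom.toLinearMap_apply,
    Algebra.algebraMap_eq_smul_one]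

lemma tw_one : twistedAntipode δ (1 : H) = 1 := by
  rw [tw_apply δ (oneRepr (k := k) (H := H))]
  simp [oneRepr, antipode_one]

lemma tw_mul (x y : H) :
    twistedAntipode δ (x * y) = twistedAntipode δ y * twistedAntipode δ x := by
  rw [tw_apply δ (mulRepr (ℛ k x) (ℛ k y)), tw_apply δ (ℛ k x), tw_apply δ (ℛ k y),
    Finset.sum_mul_sum]
  simp only [mulRepr, Finset.sum_product]
  rw [Finset.sum_comm]
  refine Finset.sum_congr rfl fun j _ => Finset.sum_congr rfl fun i _ => ?_
  rw [map_mul, antipode_mul, smul_mul_assoc, mul_smul_comm, smul_smul,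
    mul_comm (δ ((ℛ k y).left j)) (δ ((ℛ k x).left i))]

end TA

end HCAux

namespace HCAux

section Main

open Coalgebra

variable (δ : H →ₐ[k] k) (σ σinv : H)

/-- The anti-Yetter--Drinfeld condition, in Sweedler-representation form:
`δ(h⁽²⁾) • S(h⁽³⁾) σ h⁽¹⁾ = δ(h) σ`. -/
def Cnd : Prop :=
  ∀ (h : H) (ι κ : Type) (r : Coalgebra.Repr.{0, 0, 0} k h ι)
    (r2 : ∀ i : ι, Coalgebra.Repr.{0, 0, 0} k (r.right i) κ),
    ∑ i ∈ r.index, ∑ j ∈ (r2 i).index,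
      δ ((r2 i).left j) • ((aS (k := k)) ((r2 i).right j) * σ * r.left i)
    = δ h • σ

/-- The trilinear map underlying the AYD condition. -/
noncomputable def XiF : H →ₗ[k] H →ₗ[k] H →ₗ[k] H :=
  mk3 (fun a b c => δ b • ((aS (k := k)) c * σ * a))
    (fun b c => ⟨fun a a' => by simp [mul_add, smul_add], fun s a => by
      simp [mul_smul_comm, smul_comm (δ b) s]⟩)
    (fun a c => ⟨fun b b' => by simp [add_smul], fun s b => by simp [mul_smul]⟩)
    (fun a b => ⟨fun c c' => by simp [add_mul, smul_add], fun s c => by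
      simp [smul_mul_assoc, smul_comm (δ b) s]⟩)

/-- The canonical (representation-independent) form of the AYD sum. -/
noncomputable def Xi : H →ₗ[k] H :=
  lift3 (XiF δ σ) ∘ₗ LinearMap.lTensor H (Coalgebra.comul (R := k)) ∘ₗ
    Coalgebra.comul (R := k)

lemma Xi_apply (h : H) {ι κ : Type} (r : Repr k h ι) (r2 : ∀ i : ι, Repr k (r.right i) κ) :
    Xi δ σ h = ∑ i ∈ r.index, ∑ j ∈ (r2 i).index,
      δ ((r2 i).left j) • ((aS (k := k)) ((r2 i).right j) * σ * r.left i) := by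
  have h1 := nested_eq (XiF δ σ) r r2
  rw [Xi, LinearMap.comp_apply, LinearMap.comp_apply, ← h1]
  simp only [XiF, mk3_apply]

lemma cnd_iff_xi : Cnd δ σ ↔ ∀ h : H, Xi δ σ h = δ h • σ := by
  constructor
  · intro hC h
    rw [Xi_apply δ σ h (ℛ k h) (fun i => ℛ k ((ℛ k h).right i))]
    exact hC h _ _ (ℛ k h) _
  · intro hXi h ι κ r r2
    rw [← Xi_apply δ σ h r r2]
    exact hXi h

lemma mpi_to_cnd (hσinv' : σinv * σ = 1)
    (hmpi : ∀ h : H, twistedAntipode δ (twistedAntipode δ h) = σ * h * σinv) :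
    Cnd δ σ := by
  intro h ι κ r r2
  have key : ∀ x : H, σ * x = twistedAntipode δ (twistedAntipode δ x) * σ := by
    intro x
    rw [hmpi x, mul_assoc, mul_assoc, hσinv', mul_one]
  calc ∑ i ∈ r.index, ∑ j ∈ (r2 i).index,
        δ ((r2 i).left j) • ((aS (k := k)) ((r2 i).right j) * σ * r.left i)
      = ∑ i ∈ r.index, twistedAntipode δ (r.right i) * σ * r.left i := by
        refine Finset.sum_congr rfl fun i _ => ?_
        rw [tw_apply δ (r2 i), Finset.sum_mul, Finset.sum_mul]
        refine Finset.sum_congr rfl fun j _ => ?_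
        rw [smul_mul_assoc, smul_mul_assoc]
    _ = ∑ i ∈ r.index, twistedAntipode δ (twistedAntipode δ (r.left i) * r.right i)
          * σ := by
        refine Finset.sum_congr rfl fun i _ => ?_
        rw [mul_assoc, key (r.left i), ← mul_assoc, tw_mul]
    _ = twistedAntipode δ (∑ i ∈ r.index,
          twistedAntipode δ (r.left i) * r.right i) * σ := by
        rw [map_sum, Finset.sum_mul]
    _ = δ h • σ := by
        rw [tw_sum_mul δ r, map_smul, tw_one, smul_mul_assoc, one_mul]

variable (Sinv : H →ₗ[k] H)
variable (hS : ∀ h : H, Sinv (HopfAlgebra.antipode (R := k) h) = h)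
variable (hS' : ∀ h : H, HopfAlgebra.antipode (R := k) (Sinv h) = h)

include hS hS' in
lemma cnd_to_star (hC : Cnd δ σ) (h : H) {ι : Type} (r : Repr k h ι) :
    twistedAntipode δ h * σ
      = ∑ i ∈ r.index, δ (r.right i) • (σ * Sinv (r.left i)) := by
  classical
  -- trilinear map (a, b, c) ↦ S̃(c) * σ * b * Sinv(a)
  set F : H →ₗ[k] H →ₗ[k] H →ₗ[k] H :=
    mk3 (fun a b c => twistedAntipode δ c * σ * b * Sinv a)
      (fun b c => ⟨fun a a' => by simp [mul_add], fun s a => by simp [mul_smul_comm]⟩)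
      (fun a c => ⟨fun b b' => by simp [mul_add, add_mul], fun s b => by
        simp [mul_smul_comm, smul_mul_assoc]⟩)
      (fun a b => ⟨fun c c' => by simp [add_mul], fun s c => by simp [smul_mul_assoc]⟩)
    with hF
  have tri := tri_sum (M := H) F r (fun i => ℛ k (r.left i)) (fun i => ℛ k (r.right i))
  simp only [hF, mk3_apply] at tri
  calc twistedAntipode δ h * σ
      = twistedAntipode δ (∑ i ∈ r.index,
          counit (R := k) (r.left i) • r.right i) * σ := by rw [sum_counit_smul_left r]
    _ = ∑ i ∈ r.index, counit (R := k) (r.left i)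
          • (twistedAntipode δ (r.right i) * σ) := by
        rw [map_sum, Finset.sum_mul]
        exact Finset.sum_congr rfl fun i _ => by rw [map_smul, smul_mul_assoc]
    _ = ∑ i ∈ r.index, ∑ j ∈ (ℛ k (r.left i)).index,
          twistedAntipode δ (r.right i) * σ * ((ℛ k (r.left i)).right j)
            * Sinv ((ℛ k (r.left i)).left j) := by
        refine Finset.sum_congr rfl fun i _ => ?_
        have collapse := sum_mul_sinv Sinv hS hS' (ℛ k (r.left i))
        calc counit (R := k) (r.left i) • (twistedAntipode δ (r.right i) * σ)
            = twistedAntipode δ (r.right i) * σ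
                * (∑ j ∈ (ℛ k (r.left i)).index,
                  (ℛ k (r.left i)).right j * Sinv ((ℛ k (r.left i)).left j)) := by
              rw [collapse, mul_smul_comm, mul_one]
          _ = ∑ j ∈ (ℛ k (r.left i)).index,
                twistedAntipode δ (r.right i) * σ * ((ℛ k (r.left i)).right j)
                  * Sinv ((ℛ k (r.left i)).left j) := by
              rw [Finset.mul_sum]
              exact Finset.sum_congr rfl fun j _ => (mul_assoc _ _ _).symm
    _ = ∑ i ∈ r.index, ∑ j ∈ (ℛ k (r.right i)).index,
          twistedAntipode δ ((ℛ k (r.right i)).right j) * σ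
            * ((ℛ k (r.right i)).left j) * Sinv (r.left i) := tri
    _ = ∑ i ∈ r.index, (δ (r.right i) • σ) * Sinv (r.left i) := by
        refine Finset.sum_congr rfl fun i _ => ?_
        rw [← Finset.sum_mul]
        congr 1
        have hCi := hC (r.right i) _ _ (ℛ k (r.right i))
          (fun j => ℛ k ((ℛ k (r.right i)).right j))
        rw [← hCi]
        refine Finset.sum_congr rfl fun j _ => ?_
        rw [tw_apply δ (ℛ k ((ℛ k (r.right i)).right j)), Finset.sum_mul,
          Finset.sum_mul]
        refine Finset.sum_congr rfl fun n _ => ?_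
        rw [smul_mul_assoc, smul_mul_assoc]
    _ = ∑ i ∈ r.index, δ (r.right i) • (σ * Sinv (r.left i)) := by
        refine Finset.sum_congr rfl fun i _ => ?_
        rw [smul_mul_assoc]

/-- Representation of `comul (Sinv x)` from a representation of `x`. -/
noncomputable def sinvRepr {x : H} {ι : Type} (r : Repr k x ι) : Repr k (Sinv x) ι :=
  ⟨r.index, fun i => Sinv (r.right i), fun i => Sinv (r.left i),
    (comul_sinv Sinv hS hS' r).symm⟩

include hS hS' in
lemma tw_sinv (x : H) {ι : Type} (r : Repr k x ι) :
    twistedAntipode δ (Sinv x)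
      = ∑ i ∈ r.index, δ ((aS (k := k)) (r.right i)) • r.left i := by
  rw [tw_apply δ (sinvRepr Sinv hS hS' r)]
  simp only [sinvRepr]
  refine Finset.sum_congr rfl fun i _ => ?_
  rw [delta_sinv δ Sinv hS' (r.right i),
    show (aS (k := k)) (Sinv (r.left i)) = r.left i from hS' _]

include hS hS' in
lemma star_to_mpi (hδσ : δ σ = 1)
    (hσ : Coalgebra.comul (R := k) σ = σ ⊗ₜ σ)
    (hεσ : Coalgebra.counit (R := k) σ = (1 : k))
    (hσinv : σ * σinv = 1) (hσinv' : σinv * σ = 1)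
    (hstar : ∀ (h : H) (r : Coalgebra.Repr.{0, 0, 0} k h (H × H)), twistedAntipode δ h * σ
      = ∑ i ∈ r.index, δ (r.right i) • (σ * Sinv (r.left i)))
    (h : H) :
    twistedAntipode δ (twistedAntipode δ h) = σ * h * σinv := by
  classical
  set r := ℛ k h with hr
  have hδσinv : δ σinv = 1 := by
    have := map_mul δ σ σinv
    rw [hσinv, map_one, hδσ, one_mul] at this
    exact this.symm
  have tw_sigma : twistedAntipode δ σ = σinv := by
    rw [tw_apply δ (grpRepr (k := k) σ hσ)]
    simp [grpRepr, hδσ, aS_sigma σ σinv hσ hεσ hσinv hσinv']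
  have tw_sigmainv : twistedAntipode δ σinv = σ := by
    rw [tw_apply δ (grpRepr (k := k) σinv (comul_sigmainv σ σinv hσ hσinv hσinv'))]
    simp [grpRepr, hδσinv, aS_sigmainv σ σinv hσ hεσ hσinv hσinv']
  -- step 1 : unfold S̃ h using the star identity
  have h1 : twistedAntipode δ h
      = ∑ i ∈ r.index, δ (r.right i) • (σ * Sinv (r.left i) * σinv) := by
    calc twistedAntipode δ h
        = twistedAntipode δ h * (σ * σinv) := by rw [hσinv, mul_one]
      _ = (twistedAntipode δ h * σ) * σinv := (mul_assoc _ _ _).symm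
      _ = (∑ i ∈ r.index, δ (r.right i) • (σ * Sinv (r.left i))) * σinv := by
          rw [hstar h r]
      _ = ∑ i ∈ r.index, δ (r.right i) • (σ * Sinv (r.left i) * σinv) := by
          rw [Finset.sum_mul]
          exact Finset.sum_congr rfl fun i _ => by rw [smul_mul_assoc]
  -- step 2 : apply S̃ once more
  have h2 : twistedAntipode δ (twistedAntipode δ h)
      = ∑ i ∈ r.index, ∑ j ∈ (ℛ k (r.left i)).index,
          (δ ((aS (k := k)) ((ℛ k (r.left i)).right j)) * δ (r.right i))
            • (σ * ((ℛ k (r.left i)).left j * σinv)) := by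
    rw [h1, map_sum]
    refine Finset.sum_congr rfl fun i _ => ?_
    rw [map_smul, tw_mul, tw_mul, tw_sigma, tw_sigmainv,
      tw_sinv δ Sinv hS hS' (r.left i) (ℛ k (r.left i))]
    rw [Finset.sum_mul, Finset.mul_sum, Finset.smul_sum]
    refine Finset.sum_congr rfl fun j _ => ?_
    rw [smul_mul_assoc, mul_smul_comm, smul_smul, mul_comm (δ (r.right i))]
  -- step 3 : reassociate via coassociativity
  set F : H →ₗ[k] H →ₗ[k] H →ₗ[k] H :=
    mk3 (fun a b c => (δ ((aS (k := k)) b) * δ c) • (σ * (a * σinv)))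
      (fun b c => ⟨fun a a' => by simp [add_mul, mul_add, smul_add], fun s a => by
        simp [smul_mul_assoc, mul_smul_comm, smul_comm _ s]⟩)
      (fun a c => ⟨fun b b' => by simp [map_add, add_mul, add_smul], fun s b => by
        simp [map_smul, smul_eq_mul, smul_smul, mul_assoc, mul_left_comm, mul_comm]⟩)
      (fun a b => ⟨fun c c' => by simp [map_add, mul_add, add_smul], fun s c => by
        simp [map_smul, smul_eq_mul, smul_smul, mul_assoc, mul_left_comm, mul_comm]⟩)
    with hF
  have tri := tri_sum (M := H) F r (fun i => ℛ k (r.left i)) (fun i => ℛ k (r.right i))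
  simp only [hF, mk3_apply] at tri
  rw [h2, tri]
  -- step 4 : collapse the inner antipode sum and the counit sum
  calc ∑ i ∈ r.index, ∑ j ∈ (ℛ k (r.right i)).index,
        (δ ((aS (k := k)) ((ℛ k (r.right i)).left j)) * δ ((ℛ k (r.right i)).right j))
          • (σ * (r.left i * σinv))
      = ∑ i ∈ r.index, counit (R := k) (r.right i) • (σ * (r.left i * σinv)) := by
        refine Finset.sum_congr rfl fun i _ => ?_
        rw [← Finset.sum_smul]
        congr 1
        calc ∑ j ∈ (ℛ k (r.right i)).index,
            δ ((aS (k := k)) ((ℛ k (r.right i)).left j)) * δ ((ℛ k (r.right i)).right j)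
            = δ (∑ j ∈ (ℛ k (r.right i)).index,
                (aS (k := k)) ((ℛ k (r.right i)).left j) * (ℛ k (r.right i)).right j) := by
              rw [map_sum]
              exact Finset.sum_congr rfl fun j _ => (map_mul δ _ _).symm
          _ = counit (R := k) (r.right i) := by
              rw [sum_aS_mul (ℛ k (r.right i)), map_smul, map_one, smul_eq_mul, mul_one]
    _ = σ * ((∑ i ∈ r.index, counit (R := k) (r.right i) • r.left i) * σinv) := by
        rw [Finset.sum_mul, Finset.mul_sum]
        exact Finset.sum_congr rfl fun i _ => by rw [smul_mul_assoc, mul_smul_comm]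
    _ = σ * h * σinv := by rw [sum_counit_smul_right r, mul_assoc]

end Main

end HCAux


namespace HCAux

section Plumb

open Coalgebra HC

variable {k : Type} [Field k] {H : Type} [Ring H] [HopfAlgebra k H]

@[simp] lemma aS_def : aS (k := k) (H := H) = HopfAlgebra.antipode (R := k) := rfl

lemma exists_nat_repr (x : H ⊗[k] H) :
    ∃ (s : Finset ℕ) (a b : ℕ → H), x = ∑ i ∈ s, a i ⊗ₜ b i := by
  classical
  induction x using TensorProduct.induction_on with
  | zero => exact ⟨∅, fun _ => 0, fun _ => 0, by simp⟩
  | tmul u v => exact ⟨{0}, fun _ => u, fun _ => v, by simp⟩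
  | add z w ihz ihw =>
    obtain ⟨s1, a1, b1, h1⟩ := ihz
    obtain ⟨s2, a2, b2, h2⟩ := ihw
    set N := s1.sup id + 1 with hN
    have hnotmem : ∀ m : ℕ, m + N ∉ s1 := by
      intro m hm
      have := Finset.le_sup (f := id) hm
      simp only [id] at this
      omega
    have hdisj : Disjoint s1 (s2.image (fun n => n + N)) := by
      rw [Finset.disjoint_right]
      intro n hn
      obtain ⟨m, _, rfl⟩ := Finset.mem_image.mp hn
      exact hnotmem m
    refine ⟨s1 ∪ s2.image (fun n => n + N),
      fun n => if n ∈ s1 then a1 n else a2 (n - N),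
      fun n => if n ∈ s1 then b1 n else b2 (n - N), ?_⟩
    rw [Finset.sum_union hdisj]
    have e1 : ∑ n ∈ s1, (if n ∈ s1 then a1 n else a2 (n - N)) ⊗ₜ[k]
        (if n ∈ s1 then b1 n else b2 (n - N)) = z := by
      rw [h1]
      exact Finset.sum_congr rfl fun n hn => by rw [if_pos hn, if_pos hn]
    have e2 : ∑ n ∈ s2.image (fun n => n + N),
        (if n ∈ s1 then a1 n else a2 (n - N)) ⊗ₜ[k]
        (if n ∈ s1 then b1 n else b2 (n - N)) = w := by
      rw [Finset.sum_image (fun a _ b _ hab => by omega), h2]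
      refine Finset.sum_congr rfl fun n hn => ?_
      rw [if_neg (hnotmem n), if_neg (hnotmem n), Nat.add_sub_cancel]
    rw [e1, e2]

variable (δ : H →ₐ[k] k) (σ : H)

lemma stable_iff :
    StableL ((LinearMap.mul k k) ∘ₗ δ.toLinearMap)
        (LinearMap.toSpanSingleton k (H ⊗[k] k) (σ ⊗ₜ (1 : k))) ↔ δ σ = 1 := by
  constructor
  · intro hSt
    have h := hSt 1 {0} (fun _ => σ) (fun _ => (1 : k))
      (by simp [LinearMap.toSpanSingleton_apply])
    simpa using h
  · intro hδσ m u e m0 hco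
    have key := congrArg (TensorProduct.lift ((LinearMap.mul k k) ∘ₗ δ.toLinearMap)) hco
    simp only [LinearMap.toSpanSingleton_apply, map_smul, map_sum,
      TensorProduct.lift.tmul, LinearMap.comp_apply, AlgHom.toLinearMap_apply,
      LinearMap.mul_apply', hδσ, one_mul, smul_eq_mul, mul_one] at key
    simpa using key.symm

lemma sum_eq_xi (h : H) (s : Finset ℕ) (a b : ℕ → H) (t : ℕ → Finset ℕ)
    (c d : ℕ → ℕ → H)
    (hΔ : Coalgebra.comul (R := k) h = ∑ i ∈ s, a i ⊗ₜ b i)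
    (hb : ∀ i ∈ s, Coalgebra.comul (R := k) (b i) = ∑ j ∈ t i, c i j ⊗ₜ d i j) :
    ∑ i ∈ s, ∑ j ∈ t i,
      δ (c i j) • (HopfAlgebra.antipode (R := k) (d i j) * σ * a i) = Xi δ σ h := by
  classical
  have hXi := Xi_apply δ σ h ⟨s, a, b, hΔ.symm⟩
    (fun i => if hi : i ∈ s then ⟨t i, c i, d i, (hb i hi).symm⟩ else
        let E := exists_nat_repr (k := k) (Coalgebra.comul (R := k) (b i))
        ⟨E.choose, E.choose_spec.choose, E.choose_spec.choose_spec.choose,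
          E.choose_spec.choose_spec.choose_spec.symm⟩)
  rw [hXi]
  refine Finset.sum_congr rfl fun i hi => ?_
  rw [dif_pos hi]
  rfl

lemma ayd_rhs_eq (s : Finset ℕ) (a : ℕ → H) (t : ℕ → Finset ℕ) (c d : ℕ → ℕ → H)
    (u : Finset ℕ) (e : ℕ → H) (m0 : ℕ → k) (m : k)
    (hco : ∑ l ∈ u, e l ⊗ₜ[k] m0 l = m • (σ ⊗ₜ (1 : k))) :
    ∑ i ∈ s, ∑ j ∈ t i, ∑ l ∈ u,
      (HopfAlgebra.antipode (R := k) (d i j) * e l * a i) ⊗ₜ[k] (δ (c i j) * m0 l)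
    = m • ((∑ i ∈ s, ∑ j ∈ t i,
        δ (c i j) • (HopfAlgebra.antipode (R := k) (d i j) * σ * a i)) ⊗ₜ[k] (1 : k)) := by
  have inner : ∀ i j, ∑ l ∈ u,
      (HopfAlgebra.antipode (R := k) (d i j) * e l * a i) ⊗ₜ[k] (δ (c i j) * m0 l)
      = m • (δ (c i j) •
          ((HopfAlgebra.antipode (R := k) (d i j) * σ * a i) ⊗ₜ[k] (1 : k))) := by
    intro i j
    have hG := congrArg (TensorProduct.map
      ((LinearMap.mulRight k (a i)) ∘ₗ
        (LinearMap.mulLeft k (HopfAlgebra.antipode (R := k) (d i j))))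
      (LinearMap.mulLeft k (δ (c i j)))) hco
    simp only [map_sum, map_smul, TensorProduct.map_tmul, LinearMap.comp_apply,
      LinearMap.mulLeft_apply, LinearMap.mulRight_apply] at hG
    rw [hG]
    congr 1
    rw [mul_one, ← TensorProduct.tmul_smul, smul_eq_mul, mul_one]
  calc ∑ i ∈ s, ∑ j ∈ t i, ∑ l ∈ u,
      (HopfAlgebra.antipode (R := k) (d i j) * e l * a i) ⊗ₜ[k] (δ (c i j) * m0 l)
      = ∑ i ∈ s, ∑ j ∈ t i, m • (δ (c i j) •
          ((HopfAlgebra.antipode (R := k) (d i j) * σ * a i) ⊗ₜ[k] (1 : k))) := by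
        exact Finset.sum_congr rfl fun i _ => Finset.sum_congr rfl fun j _ => inner i j
    _ = m • ((∑ i ∈ s, ∑ j ∈ t i,
        δ (c i j) • (HopfAlgebra.antipode (R := k) (d i j) * σ * a i)) ⊗ₜ[k] (1 : k)) := by
        rw [TensorProduct.sum_tmul, Finset.smul_sum]
        refine Finset.sum_congr rfl fun i _ => ?_
        rw [TensorProduct.sum_tmul, Finset.smul_sum]
        refine Finset.sum_congr rfl fun j _ => ?_
        congr 1

lemma ayd_of_xi (hXi : ∀ h : H, Xi δ σ h = δ h • σ) :
    AYDrl (Coalgebra.comul (R := k)) (HopfAlgebra.antipode (R := k))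
      ((LinearMap.mul k k) ∘ₗ δ.toLinearMap)
      (LinearMap.toSpanSingleton k (H ⊗[k] k) (σ ⊗ₜ (1 : k))) := by
  intro h m s a b t c d u e m0 hΔ hb hco
  have hco' : ∑ l ∈ u, e l ⊗ₜ[k] m0 l = m • (σ ⊗ₜ (1 : k)) := by
    rw [← hco, LinearMap.toSpanSingleton_apply]
  have rhs := ayd_rhs_eq δ σ s a t c d u e m0 m hco'
  have act_eq : ∀ (x : H) (y : k),
      ((LinearMap.mul k k) ∘ₗ δ.toLinearMap) x y = δ x * y := fun x y => rfl
  calc (LinearMap.toSpanSingleton k (H ⊗[k] k) (σ ⊗ₜ (1 : k)))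
        (((LinearMap.mul k k) ∘ₗ δ.toLinearMap) h m)
      = (δ h * m) • (σ ⊗ₜ (1 : k)) := by rw [LinearMap.toSpanSingleton_apply, act_eq]
    _ = m • ((δ h • σ) ⊗ₜ[k] (1 : k)) := by
        rw [TensorProduct.smul_tmul', TensorProduct.smul_tmul', smul_smul,
          mul_comm m (δ h)]
    _ = m • ((Xi δ σ h) ⊗ₜ[k] (1 : k)) := by rw [hXi]
    _ = m • ((∑ i ∈ s, ∑ j ∈ t i,
        δ (c i j) • (HopfAlgebra.antipode (R := k) (d i j) * σ * a i)) ⊗ₜ[k] (1 : k)) := by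
        rw [sum_eq_xi δ σ h s a b t c d hΔ hb]
    _ = ∑ i ∈ s, ∑ j ∈ t i, ∑ l ∈ u,
        (HopfAlgebra.antipode (R := k) (d i j) * e l * a i) ⊗ₜ[k]
          (((LinearMap.mul k k) ∘ₗ δ.toLinearMap) (c i j) (m0 l)) := rhs.symm

lemma xi_of_ayd
    (hA : AYDrl (Coalgebra.comul (R := k)) (HopfAlgebra.antipode (R := k))
      ((LinearMap.mul k k) ∘ₗ δ.toLinearMap)
      (LinearMap.toSpanSingleton k (H ⊗[k] k) (σ ⊗ₜ (1 : k)))) :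
    ∀ h : H, Xi δ σ h = δ h • σ := by
  intro h
  obtain ⟨s, a, b, hΔ⟩ := exists_nat_repr (Coalgebra.comul (R := k) h)
  choose t c d hb using fun i => exists_nat_repr (Coalgebra.comul (R := k) (b i))
  have hco : (LinearMap.toSpanSingleton k (H ⊗[k] k) (σ ⊗ₜ (1 : k))) (1 : k)
      = ∑ l ∈ ({0} : Finset ℕ), σ ⊗ₜ[k] (1 : k) := by
    simp [LinearMap.toSpanSingleton_apply]
  have key := hA h 1 s a b t c d {0} (fun _ => σ) (fun _ => (1 : k)) hΔ
    (fun i _ => hb i) hco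
  have hco' : ∑ l ∈ ({0} : Finset ℕ), (fun _ : ℕ => σ) l ⊗ₜ[k] (fun _ : ℕ => (1 : k)) l
      = (1 : k) • (σ ⊗ₜ (1 : k)) := by simp
  have rhs := ayd_rhs_eq δ σ s a t c d {0} (fun _ => σ) (fun _ => (1 : k)) 1 hco'
  simp only [LinearMap.comp_apply, AlgHom.toLinearMap_apply, LinearMap.mul_apply'] at key
  rw [rhs] at key
  rw [LinearMap.toSpanSingleton_apply, mul_one, one_smul,
    sum_eq_xi δ σ h s a b t c d hΔ (fun i _ => hb i)] at key
  have := congrArg (TensorProduct.rid k H) key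
  simpa using this.symm

end Plumb

end HCAux


/-- For a character `δ` and a group-like `σ`, the module
`k = ᵟk_σ` (right action by `δ`, left coaction by `σ`) is a stable right-left
anti-Yetter-Drinfeld module over `H` if and only if `(δ, σ)` is a modular pair
in involution, i.e. `δ(σ) = 1` and `S̃² = Ad_σ`. -/
theorem stmt1
    (Sinv : H →ₗ[k] H)
    (hS : ∀ h : H, Sinv (HopfAlgebra.antipode (R := k) h) = h)
    (hS' : ∀ h : H, HopfAlgebra.antipode (R := k) (Sinv h) = h)
    (δ : H →ₐ[k] k) (σ σinv : H)
    (hσ : Coalgebra.comul (R := k) σ = σ ⊗ₜ σ)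
    (hεσ : Coalgebra.counit (R := k) σ = (1 : k))
    (hσinv : σ * σinv = 1) (hσinv' : σinv * σ = 1) :
    (AYDrl (Coalgebra.comul (R := k)) (HopfAlgebra.antipode (R := k))
        ((LinearMap.mul k k) ∘ₗ δ.toLinearMap)
        (LinearMap.toSpanSingleton k (H ⊗[k] k) (σ ⊗ₜ (1 : k))) ∧
      StableL ((LinearMap.mul k k) ∘ₗ δ.toLinearMap)
        (LinearMap.toSpanSingleton k (H ⊗[k] k) (σ ⊗ₜ (1 : k)))) ↔
    (δ σ = 1 ∧ ∀ h : H, twistedAntipode δ (twistedAntipode δ h) = σ * h * σinv) := by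
  constructor
  · rintro ⟨hA, hSt⟩
    have hδσ : δ σ = 1 := (HCAux.stable_iff δ σ).mp hSt
    refine ⟨hδσ, ?_⟩
    have hXi := HCAux.xi_of_ayd δ σ hA
    have hC : HCAux.Cnd δ σ := (HCAux.cnd_iff_xi δ σ).mpr hXi
    exact HCAux.star_to_mpi δ σ σinv Sinv hS hS' hδσ hσ hεσ hσinv hσinv'
      (fun h r => HCAux.cnd_to_star δ σ Sinv hS hS' hC h r)
  · rintro ⟨hδσ, hmpi⟩
    have hC := HCAux.mpi_to_cnd δ σ σinv hσinv' hmpi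
    have hXi := (HCAux.cnd_iff_xi δ σ).mp hC
    exact ⟨HCAux.ayd_of_xi δ σ hXi, (HCAux.stable_iff δ σ).mpr hδσ⟩
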